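/- Let f ∈ K[x] be separable with ordered roots a in a splitting field, T ≤ S_n a subgroup, F ∈ K[x_1,...,x_n] a T-invariant polynomial, and D = Tσ_0 G_a a double coset in S_n, where G_a is the Galois group as a subgroup of S_n. Then the polynomial Γ_{a,D}^F(X) = ∏_{σ ∈ T\D} (X − e_a^F(σ)) has all coefficients in K. -/

import Mathlib

/-- The polynomial `Γ_{a,D}^F(X) = ∏_{σ ∈ T\D} (X − e_a^F(σ))` attached to a double
coset `D = Tσ₀G_a` has all its coefficients in `K`. Here `R` is a set of
representatives of the right `T`-cosets contained in `D`. -/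
theorem stmt4 (K L : Type*) [Field K] [Field L] [Algebra K L]
    [FiniteDimensional K L] [IsGalois K L] (n : ℕ)
    (f : Polynomial K) (hsep : f.Separable) (a : Fin n → L)
    (hroots : f.map (algebraMap K L) = ∏ i, (Polynomial.X - Polynomial.C (a i)))
    (hgen : Algebra.adjoin K (Set.range a) = ⊤)
    (G : Subgroup (Equiv.Perm (Fin n)))
    (hG : ∀ π : Equiv.Perm (Fin n),
      π ∈ G ↔ ∃ g : L ≃ₐ[K] L, ∀ i, g (a i) = a (π i))
    (T : Subgroup (Equiv.Perm (Fin n)))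
    (F : MvPolynomial (Fin n) K)
    (hF : ∀ τ ∈ T, MvPolynomial.rename ⇑τ F = F)
    (σ₀ : Equiv.Perm (Fin n)) (R : Finset (Equiv.Perm (Fin n)))
    (hR1 : ∀ r ∈ R, ∃ t ∈ T, ∃ g ∈ G, r = t * σ₀ * g)
    (hR2 : ∀ t ∈ T, ∀ g ∈ G, ∃! r, r ∈ R ∧ ∃ t' ∈ T, t * σ₀ * g = t' * r)
    (m : ℕ) :
    (∏ r ∈ R, (Polynomial.X - Polynomial.C
        (MvPolynomial.aeval (fun i => a (r⁻¹ i)) F))).coeff m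
      ∈ (algebraMap K L).range := by
  classical
  set e : Equiv.Perm (Fin n) → L :=
    fun s => MvPolynomial.aeval (fun i => a (s⁻¹ i)) F with he
  set P : Polynomial L := ∏ r ∈ R, (Polynomial.X - Polynomial.C (e r)) with hP
  -- a is injective
  have hainj : Function.Injective a := by
    have h1 : (f.map (algebraMap K L)).Separable := hsep.map
    rw [hroots] at h1
    exact Polynomial.separable_prod_X_sub_C_iff.mp h1
  -- e is left-T-invariant
  have hTinv : ∀ t ∈ T, ∀ s : Equiv.Perm (Fin n), e (t * s) = e s := by
    intro t ht s
    show MvPolynomial.aeval _ F = MvPolynomial.aeval _ F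
    conv_rhs => rw [← hF t⁻¹ (inv_mem ht), MvPolynomial.aeval_rename]
    rfl
  -- elements of R in the same left T-coset coincide
  have hRuniq : ∀ r₁ ∈ R, ∀ r₂ ∈ R, ∀ t ∈ T, r₁ = t * r₂ → r₁ = r₂ := by
    intro r₁ h₁ r₂ h₂ t ht hr
    obtain ⟨u, hu, h, hh, hr₂⟩ := hR1 r₂ h₂
    obtain ⟨r', -, hr'⟩ := hR2 u hu h hh
    have e1 : r₂ = r' := hr' r₂ ⟨h₂, 1, one_mem T, by rw [← hr₂, one_mul]⟩
    have e2 : r₁ = r' := hr' r₁ ⟨h₁, t⁻¹, inv_mem ht, by rw [← hr₂, hr]; group⟩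
    rw [e2, ← e1]
  -- every coefficient of P is fixed by every automorphism
  have key : ∀ g : L ≃ₐ[K] L, g (P.coeff m) = P.coeff m := by
    intro g
    -- find the permutation π associated to g
    have hroot : ∀ i, ∃ j, a j = g (a i) := by
      intro i
      have h0 : Polynomial.aeval (a i) f = 0 := by
        rw [Polynomial.aeval_def, Polynomial.eval₂_eq_eval_map, hroots,
          Polynomial.eval_prod]
        exact Finset.prod_eq_zero (Finset.mem_univ i) (by simp)
      have h1 : Polynomial.aeval (g (a i)) f = 0 := by
        rw [Polynomial.aeval_algHom_apply g (a i) f, h0, map_zero]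
      rw [Polynomial.aeval_def, Polynomial.eval₂_eq_eval_map, hroots,
        Polynomial.eval_prod, Finset.prod_eq_zero_iff] at h1
      obtain ⟨j, -, hj⟩ := h1
      simp only [Polynomial.eval_sub, Polynomial.eval_X, Polynomial.eval_C,
        sub_eq_zero] at hj
      exact ⟨j, hj.symm⟩
    choose p hpa using hroot
    have hpinj : Function.Injective p := fun i j hij => by
      apply hainj; apply g.injective; rw [← hpa i, ← hpa j, hij]
    let π : Equiv.Perm (Fin n) := Equiv.ofBijective p
      ((Finite.injective_iff_bijective).mp hpinj)
    have hπ : ∀ i, g (a i) = a (π i) := fun i => (hpa i).symm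
    have hπG : π ∈ G := (hG π).mpr ⟨g, hπ⟩
    -- g ∘ e = e ∘ (· * π⁻¹)
    have hge : ∀ s : Equiv.Perm (Fin n), g (e s) = e (s * π⁻¹) := by
      intro s
      show g (MvPolynomial.aeval _ F) = MvPolynomial.aeval _ F
      show (g : L →ₐ[K] L) ((MvPolynomial.aeval fun i => a (s⁻¹ i)) F) = _
      rw [MvPolynomial.comp_aeval_apply]
      exact congrArg (fun v : Fin n → L => MvPolynomial.aeval v F)
        (funext fun i => by
          show g (a (s⁻¹ i)) = a ((s * π⁻¹)⁻¹ i)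
          rw [hπ]
          rfl)
    -- the map φ : R → R induced by right multiplication by π⁻¹
    have hφ : ∀ r ∈ R, ∃ r' ∈ R, ∃ t' ∈ T, r * π⁻¹ = t' * r' := by
      intro r hr
      obtain ⟨t, ht, h, hh, hrth⟩ := hR1 r hr
      obtain ⟨r', ⟨hr'R, t', ht', heq⟩, -⟩ := hR2 t ht (h * π⁻¹) (mul_mem hh (inv_mem hπG))
      exact ⟨r', hr'R, t', ht', by rw [hrth]; rw [← heq]; group⟩
    choose φ hφR tt htT hφe using hφ
    -- φ is injective on R
    have hφinj : ∀ (r₁ r₂ : Equiv.Perm (Fin n)) (h₁ : r₁ ∈ R)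
        (h₂ : r₂ ∈ R), φ r₁ h₁ = φ r₂ h₂ → r₁ = r₂ := by
      intro r₁ r₂ h₁ h₂ hEq
      have e₁ := hφe r₁ h₁
      have e₂ := hφe r₂ h₂
      rw [hEq] at e₁
      have hc : r₁ * π⁻¹ = (tt r₁ h₁ * (tt r₂ h₂)⁻¹) * (r₂ * π⁻¹) := by
        rw [e₁, e₂]; group
      have : r₁ = (tt r₁ h₁ * (tt r₂ h₂)⁻¹) * r₂ := by
        apply mul_right_cancel (b := π⁻¹)
        rw [hc]; group
      exact hRuniq r₁ h₁ r₂ h₂ _ (mul_mem (htT r₁ h₁) (inv_mem (htT r₂ h₂))) this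
    -- hence P is invariant under g
    have hmap : P.map (g : L →+* L) = P := by
      rw [hP, Polynomial.map_prod]
      simp only [Polynomial.map_sub, Polynomial.map_X, Polynomial.map_C]
      have heq : ∀ (r : Equiv.Perm (Fin n)) (hr : r ∈ R),
          (g : L →+* L) (e r) = e (φ r hr) := by
        intro r hr
        show g (e r) = _
        rw [hge, hφe r hr, hTinv _ (htT r hr)]
      refine Finset.prod_bij (fun r hr => φ r hr) hφR
        (fun r₁ h₁ r₂ h₂ => hφinj r₁ r₂ h₁ h₂) ?_
        (fun r hr => by rw [heq r hr])
      intro b hb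
      obtain ⟨a1, ha, hba⟩ := Finset.surj_on_of_inj_on_of_card_le
        (fun r hr => φ r hr) hφR hφinj le_rfl b hb
      exact ⟨a1, ha, hba.symm⟩
    conv_rhs => rw [← hmap, Polynomial.coeff_map]
    rfl
  -- conclude via the Galois correspondence
  have hfix : P.coeff m ∈ IntermediateField.fixedField (⊤ : Subgroup (L ≃ₐ[K] L)) :=
    fun g => key g.1
  have hbot : IntermediateField.fixedField (⊤ : Subgroup (L ≃ₐ[K] L)) =
      (⊥ : IntermediateField K L) := by
    rw [← (IntermediateField.fixingSubgroup_bot : (⊥ : IntermediateField K L).fixingSubgroup = ⊤), IsGalois.fixedField_fixingSubgroup]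
  rw [hbot, IntermediateField.mem_bot] at hfix
  obtain ⟨y, hy⟩ := hfix
  exact ⟨y, hy⟩
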